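/- Let $S$ be a normed space and suppose: (payoff growth) $|\pi(s,x,s')| \le A + B\max\{\|s\|, \|s'\|\}$ for constants $A, B > 0$; (fold-boundedness) $\int_S \|s'\| \, \bar{Q}(ds'|s,x) \le C + \frac{D}{(1+\delta)B + \delta D}\|s\|$ for constants $C, D > 0$ and all $(s,x)$; $\delta \in [0,1)$. If $g: S \to \mathbb{R}$ satisfies $|g(s)| \le E + (B+D)\|s\|$ for some $E > 0$, then the function $F(g)(s) = \max_{x \in X}\int_S \{\pi(s,x,s') + \delta g(s')\}\, \bar{Q}(ds'|s,x)$ satisfies $|F(g)(s)| \le A + \delta E + (B + \delta(B+D)) C + (B+D)\|s\|$ for all $s \in S$; in particular $F$ preserves the linear growth class $\{f : \exists E>0, \; |f(s)| \le E + (B+D)\|s\|\}$. -/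
import Mathlib


open MeasureTheory

theorem bellman_growth_bound {S X : Type*} [NormedAddCommGroup S] [MeasurableSpace S]
    [BorelSpace S] [TopologicalSpace X] [CompactSpace X] [Nonempty X]
    (Q : S → X → Measure S) (hQ : ∀ s x, IsProbabilityMeasure (Q s x))
    (hQint : ∀ s x, Integrable (fun s' => ‖s'‖) (Q s x))
    (π : S → X → S → ℝ) (hπc : Continuous fun p : S × X × S => π p.1 p.2.1 p.2.2)
    (A B C D δ E : ℝ) (hA : 0 < A) (hB : 0 < B) (hC : 0 < C) (hD : 0 < D)
    (hδ0 : 0 ≤ δ) (hδ1 : δ < 1) (hE : 0 < E)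
    (hπ : ∀ s x s', |π s x s'| ≤ A + B * max ‖s‖ ‖s'‖)
    (hfold : ∀ s x, ∫ s', ‖s'‖ ∂(Q s x) ≤ C + (D / ((1 + δ) * B + δ * D)) * ‖s‖)
    (g : S → ℝ) (hgm : Measurable g) (hg : ∀ s, |g s| ≤ E + (B + D) * ‖s‖) :
    ∀ s, |⨆ x : X, ∫ s', (π s x s' + δ * g s') ∂(Q s x)|
      ≤ A + δ * E + (B + δ * (B + D)) * C + (B + D) * ‖s‖ := by
  intro s
  have hKpos : 0 < (1 + δ) * B + δ * D := by nlinarith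
  set M : ℝ := A + δ * E + (B + δ * (B + D)) * C + (B + D) * ‖s‖ with hM
  have key : ∀ x : X, |∫ s', (π s x s' + δ * g s') ∂(Q s x)| ≤ M := by
    intro x
    haveI := hQ s x
    have hns : (0:ℝ) ≤ ‖s‖ := norm_nonneg s
    have hcont : Continuous (fun s' : S => π s x s') :=
      hπc.comp (continuous_const.prodMk (continuous_const.prodMk continuous_id))
    have hbound : Integrable (fun s' : S => (A + B * ‖s‖ + δ * E) + (B + δ * (B + D)) * ‖s'‖)
        (Q s x) := (integrable_const _).add ((hQint s x).const_mul _)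
    have hptw : ∀ s' : S, ‖π s x s' + δ * g s'‖ ≤
        (A + B * ‖s‖ + δ * E) + (B + δ * (B + D)) * ‖s'‖ := by
      intro s'
      have h1 := hπ s x s'
      have h2 := hg s'
      have hmax : max ‖s‖ ‖s'‖ ≤ ‖s‖ + ‖s'‖ :=
        max_le (by linarith [norm_nonneg s']) (by linarith)
      have := abs_add_le (π s x s') (δ * g s')
      rw [Real.norm_eq_abs]
      have h3 : |δ * g s'| ≤ δ * (E + (B + D) * ‖s'‖) := by
        rw [abs_mul, abs_of_nonneg hδ0]
        exact mul_le_mul_of_nonneg_left h2 hδ0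
      nlinarith [norm_nonneg s', abs_nonneg (g s')]
    have hint : Integrable (fun s' : S => π s x s' + δ * g s') (Q s x) := by
      refine hbound.mono' ?_ (ae_of_all _ hptw)
      exact (hcont.aestronglyMeasurable.add
        ((hgm.const_mul δ).aestronglyMeasurable))
    calc |∫ s', (π s x s' + δ * g s') ∂(Q s x)|
        ≤ ∫ s', ‖π s x s' + δ * g s'‖ ∂(Q s x) := by
          rw [← Real.norm_eq_abs]; exact norm_integral_le_integral_norm _
      _ ≤ ∫ s', ((A + B * ‖s‖ + δ * E) + (B + δ * (B + D)) * ‖s'‖) ∂(Q s x) :=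
          integral_mono hint.norm hbound hptw
      _ = (A + B * ‖s‖ + δ * E) + (B + δ * (B + D)) * ∫ s', ‖s'‖ ∂(Q s x) := by
          rw [integral_add (integrable_const _) ((hQint s x).const_mul _),
            integral_const, integral_const_mul]
          simp
      _ ≤ M := by
          have hfo := hfold s x
          have hmul : (B + δ * (B + D)) * ∫ s', ‖s'‖ ∂(Q s x)
              ≤ (B + δ * (B + D)) * (C + (D / ((1 + δ) * B + δ * D)) * ‖s‖) := by
            apply mul_le_mul_of_nonneg_left hfo
            nlinarith
          have hdiv : (B + δ * (B + D)) * (D / ((1 + δ) * B + δ * D)) = D := by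
            field_simp
            ring
          rw [hM]
          nlinarith [hmul, hdiv]
  have hbdd : BddAbove (Set.range fun x : X => ∫ s', (π s x s' + δ * g s') ∂(Q s x)) := by
    refine ⟨M, ?_⟩
    rintro _ ⟨x, rfl⟩
    exact (abs_le.1 (key x)).2
  rw [abs_le]
  constructor
  · obtain ⟨x₀⟩ := ‹Nonempty X›
    exact le_trans (abs_le.1 (key x₀)).1 (le_ciSup hbdd x₀)
  · exact ciSup_le fun x => (abs_le.1 (key x)).2
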